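/- Let d ≥ 1, h > 0, and let u, χ : ℝ^d → [0,1] be measurable and Lebesgue integrable. Then ∫_{ℝ^d} (G_{h/2} ⋆ (u − χ))² dx + ( ∫_{ℝ^d} u dx − ∫_{ℝ^d} u·(G_h ⋆ u) dx ) = ∫_{ℝ^d} u·(1 − 2·(G_h ⋆ χ)) dx + ∫_{ℝ^d} χ·(G_h ⋆ χ) dx. -/

import Mathlib

open MeasureTheory

/-- The Gaussian heat kernel `G_h(z) = (2πh)^{-d/2} exp(-|z|²/(2h))` on `ℝ^d`. -/
noncomputable def gauss (d : ℕ) (h : ℝ) (z : EuclideanSpace ℝ (Fin d)) : ℝ :=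
  (2 * Real.pi * h) ^ (-(d : ℝ) / 2) * Real.exp (-‖z‖ ^ 2 / (2 * h))

/-- Convolution of two functions on `ℝ^d` w.r.t. Lebesgue measure. -/
noncomputable def conv (d : ℕ) (f g : EuclideanSpace ℝ (Fin d) → ℝ)
    (x : EuclideanSpace ℝ (Fin d)) : ℝ :=
  ∫ y, f (x - y) * g y

variable {d : ℕ} {h : ℝ}

lemma gauss_nonneg (hh : 0 < h) (z : EuclideanSpace ℝ (Fin d)) : 0 ≤ gauss d h z := by
  unfold gauss; positivity

lemma gauss_le (hh : 0 < h) (z : EuclideanSpace ℝ (Fin d)) :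
    gauss d h z ≤ (2 * Real.pi * h) ^ (-(d : ℝ) / 2) := by
  have h1 : Real.exp (-‖z‖ ^ 2 / (2 * h)) ≤ 1 := by
    apply Real.exp_le_one_iff.mpr
    apply div_nonpos_of_nonpos_of_nonneg (neg_nonpos.mpr (by positivity)) (by positivity)
  have h2 : (0:ℝ) < (2 * Real.pi * h) ^ (-(d : ℝ) / 2) := by positivity
  calc gauss d h z ≤ (2 * Real.pi * h) ^ (-(d : ℝ) / 2) * 1 := by
        unfold gauss; exact mul_le_mul_of_nonneg_left h1 h2.le
    _ = _ := mul_one _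

lemma gauss_continuous (hh : 0 < h) : Continuous (gauss d h) := by
  unfold gauss
  fun_prop

lemma gauss_eq (z : EuclideanSpace ℝ (Fin d)) :
    gauss d h z = (2 * Real.pi * h) ^ (-(d : ℝ) / 2) * Real.exp (-(1/(2*h)) * ‖z‖ ^ 2) := by
  unfold gauss; ring_nf

lemma gauss_fun_eq : gauss d h
    = fun z : EuclideanSpace ℝ (Fin d) =>
      (2 * Real.pi * h) ^ (-(d : ℝ) / 2) * Real.exp (-(1/(2*h)) * ‖z‖ ^ 2) :=
  funext fun z => gauss_eq z

lemma integrable_gauss (hh : 0 < h) : Integrable (gauss d h) := by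
  have hb : (0:ℝ) < 1/(2*h) := by positivity
  have h1 : Integrable fun z : EuclideanSpace ℝ (Fin d) =>
      Real.exp (-(1/(2*h)) * ‖z‖ ^ 2) := by
    have := GaussianFourier.integrable_cexp_neg_mul_sq_norm_add
      (V := EuclideanSpace ℝ (Fin d)) (b := (1/(2*h) : ℂ)) (by simpa using hb) 0 0
    simp only [zero_mul, add_zero] at this
    have h2 : Integrable fun z : EuclideanSpace ℝ (Fin d) =>
        Complex.exp (((-(1/(2*h)) * ‖z‖ ^ 2 : ℝ) : ℂ)) := by
      convert this using 2 with z
      push_cast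
      ring_nf
    have h3 : (fun z : EuclideanSpace ℝ (Fin d) => Real.exp (-(1/(2*h)) * ‖z‖ ^ 2))
        = fun z => (Complex.exp ((-(1/(2*h)) * ‖z‖ ^ 2 : ℝ) : ℂ)).re := by
      funext z; rw [Complex.exp_ofReal_re]
    rw [h3]; exact h2.re
  rw [gauss_fun_eq]
  exact h1.const_mul _

lemma integral_gauss (hh : 0 < h) : ∫ z, gauss d h z = 1 := by
  have hb : (0:ℝ) < 1/(2*h) := by positivity
  simp_rw [gauss_eq]
  rw [integral_const_mul]
  have := GaussianFourier.integral_rexp_neg_mul_sq_norm (V := EuclideanSpace ℝ (Fin d)) hb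
  simp_rw [neg_mul] at this ⊢
  rw [this, finrank_euclideanSpace_fin]
  rw [show Real.pi / (1/(2*h)) = 2 * Real.pi * h by field_simp]
  rw [← Real.rpow_add (by positivity)]
  rw [show (-(d:ℝ)/2 + (d:ℝ)/2) = 0 by ring, Real.rpow_zero]

lemma gauss_mul (hh : 0 < h) (y z : EuclideanSpace ℝ (Fin d)) :
    ∫ x, gauss d (h/2) (x - y) * gauss d (h/2) (x - z) = gauss d h (y - z) := by
  have hππ : (0:ℝ) < Real.pi := Real.pi_pos
  set r : ℝ := (d:ℝ)/2 with hr
  have step0 : ∫ x, gauss d (h/2) (x - y) * gauss d (h/2) (x - z)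
      = ∫ x, gauss d (h/2) (x - (y - z)) * gauss d (h/2) x := by
    rw [← integral_add_right_eq_self
      (fun x => gauss d (h/2) (x - y) * gauss d (h/2) (x - z)) z]
    congr 1; funext x
    rw [show x + z - y = x - (y - z) by abel, show x + z - z = x by abel]
  rw [step0]
  set a := y - z with ha
  have e2 : (Real.pi*h)^(-r) * (Real.pi*h)^r = 1 := by
    rw [← Real.rpow_add (by positivity)]; simp
  have e3 : (2*Real.pi*h)^(-r) * (2*Real.pi*h)^r = 1 := by
    rw [← Real.rpow_add (by positivity)]; simp
  have hpt : ∀ x : EuclideanSpace ℝ (Fin d),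
      gauss d (h/2) (x - a) * gauss d (h/2) x
      = gauss d h a * (((Real.pi*h)^(-r) * (Real.pi*h)^(-r) * (2*Real.pi*h)^r)
          * Real.exp (-(2/h) * ‖x - (2:ℝ)⁻¹ • a‖^2)) := by
    intro x
    have hsub : x - (2:ℝ)⁻¹ • a - (2:ℝ)⁻¹ • a = x - a := by
      rw [sub_sub, ← two_smul ℝ ((2:ℝ)⁻¹ • a), smul_smul]; norm_num
    have P := parallelogram_law_with_norm ℝ (x - (2:ℝ)⁻¹ • a) ((2:ℝ)⁻¹ • a)
    rw [sub_add_cancel, hsub, norm_smul] at P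
    simp only [norm_inv, Real.norm_ofNat] at P
    have P' : ‖x‖^2 + ‖x - a‖^2
        = 2*(‖x - (2:ℝ)⁻¹ • a‖^2 + (2⁻¹*‖a‖)^2) := by
      exact P
    have hS : -‖x-a‖^2/(2*(h/2)) + -‖x‖^2/(2*(h/2))
        = -‖a‖^2/(2*h) + -(2/h)*‖x - (2:ℝ)⁻¹ • a‖^2 := by
      rw [show 2*(h/2) = h by ring]
      have hh' : h ≠ 0 := ne_of_gt hh
      linear_combination (-(1:ℝ)/h) * P'
    unfold gauss
    rw [show 2*Real.pi*(h/2) = Real.pi*h by ring]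
    rw [show (-(d:ℝ)/2) = -r by rw [hr]; ring]
    rw [show (Real.pi*h)^(-r) * Real.exp (-‖x-a‖^2/(2*(h/2)))
          * ((Real.pi*h)^(-r) * Real.exp (-‖x‖^2/(2*(h/2))))
        = ((Real.pi*h)^(-r) * (Real.pi*h)^(-r))
          * Real.exp (-‖x-a‖^2/(2*(h/2)) + -‖x‖^2/(2*(h/2))) by
      rw [Real.exp_add]; ring]
    rw [hS, Real.exp_add]
    rw [show (2*Real.pi*h)^(-r) * Real.exp (-‖a‖^2/(2*h))
          * ((Real.pi*h)^(-r) * (Real.pi*h)^(-r) * (2*Real.pi*h)^r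
            * Real.exp (-(2/h) * ‖x - (2:ℝ)⁻¹ • a‖^2))
        = ((2*Real.pi*h)^(-r) * (2*Real.pi*h)^r)
          * (((Real.pi*h)^(-r) * (Real.pi*h)^(-r))
            * (Real.exp (-‖a‖^2/(2*h)) * Real.exp (-(2/h) * ‖x - (2:ℝ)⁻¹ • a‖^2))) by ring]
    rw [e3]; ring
  simp_rw [hpt]
  rw [integral_const_mul, integral_const_mul]
  have hint : ∫ x : EuclideanSpace ℝ (Fin d),
      Real.exp (-(2/h) * ‖x - (2:ℝ)⁻¹ • a‖^2) = (Real.pi*h/2)^r := by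
    rw [integral_sub_right_eq_self
      (fun x : EuclideanSpace ℝ (Fin d) => Real.exp (-(2/h) * ‖x‖^2)) ((2:ℝ)⁻¹ • a)]
    have := GaussianFourier.integral_rexp_neg_mul_sq_norm
      (V := EuclideanSpace ℝ (Fin d)) (b := 2/h) (by positivity)
    simp_rw [neg_mul] at this ⊢
    rw [this, finrank_euclideanSpace_fin]
    rw [show Real.pi / (2/h) = Real.pi*h/2 by field_simp]
  rw [hint]
  have efin : (Real.pi*h)^(-r) * (Real.pi*h)^(-r) * (2*Real.pi*h)^r * (Real.pi*h/2)^r = 1 := by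
    have e1 : (2*Real.pi*h)^r * (Real.pi*h/2)^r = (Real.pi*h)^r * (Real.pi*h)^r := by
      rw [← Real.mul_rpow (by positivity) (by positivity),
        show (2*Real.pi*h)*(Real.pi*h/2) = (Real.pi*h)*(Real.pi*h) by ring,
        Real.mul_rpow (by positivity) (by positivity)]
    calc (Real.pi*h)^(-r) * (Real.pi*h)^(-r) * (2*Real.pi*h)^r * (Real.pi*h/2)^r
        = (Real.pi*h)^(-r) * (Real.pi*h)^(-r) * ((2*Real.pi*h)^r * (Real.pi*h/2)^r) := by ring
      _ = ((Real.pi*h)^(-r) * (Real.pi*h)^r) * ((Real.pi*h)^(-r) * (Real.pi*h)^r) := by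
          rw [e1]; ring
      _ = 1 := by rw [e2]; ring
  rw [show gauss d h a * ((Real.pi*h)^(-r) * (Real.pi*h)^(-r) * (2*Real.pi*h)^r * (Real.pi*h/2)^r)
      = gauss d h a * ((Real.pi*h)^(-r) * (Real.pi*h)^(-r) * ((2*Real.pi*h)^r * (Real.pi*h/2)^r)) by ring] at *
  rw [show (Real.pi*h)^(-r) * (Real.pi*h)^(-r) * ((2*Real.pi*h)^r * (Real.pi*h/2)^r)
      = (Real.pi*h)^(-r) * (Real.pi*h)^(-r) * (2*Real.pi*h)^r * (Real.pi*h/2)^r by ring, efin, mul_one]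

lemma gauss_sub_rev (a b : EuclideanSpace ℝ (Fin d)) :
    gauss d h (a - b) = gauss d h (b - a) := by
  unfold gauss; rw [norm_sub_rev]

lemma conv_gauss_meas (hh : 0 < h) {v : EuclideanSpace ℝ (Fin d) → ℝ} (hv : Measurable v) :
    Measurable (conv d (gauss d h) v) := by
  have hm : StronglyMeasurable fun p :
      (EuclideanSpace ℝ (Fin d)) × (EuclideanSpace ℝ (Fin d)) =>
      gauss d h (p.1 - p.2) * v p.2 :=
    (((gauss_continuous hh).measurable.comp (measurable_fst.sub measurable_snd)).mul
      (hv.comp measurable_snd)).stronglyMeasurable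
  exact hm.integral_prod_right'.measurable

lemma conv_gauss_bound (hh : 0 < h) {v : EuclideanSpace ℝ (Fin d) → ℝ}
    (hv_int : Integrable v) (x : EuclideanSpace ℝ (Fin d)) :
    ‖conv d (gauss d h) v x‖ ≤ (2*Real.pi*h)^(-(d:ℝ)/2) * ∫ y, ‖v y‖ := by
  calc ‖∫ y, gauss d h (x-y) * v y‖ ≤ ∫ y, ‖gauss d h (x-y) * v y‖ :=
        norm_integral_le_integral_norm _
    _ ≤ ∫ y, (2*Real.pi*h)^(-(d:ℝ)/2) * ‖v y‖ := by
        apply integral_mono_of_nonneg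
        · filter_upwards with y; positivity
        · exact hv_int.norm.const_mul _
        · filter_upwards with y
          rw [norm_mul]
          apply mul_le_mul_of_nonneg_right _ (norm_nonneg _)
          rw [Real.norm_eq_abs, abs_of_nonneg (gauss_nonneg hh _)]
          exact gauss_le hh _
    _ = _ := integral_const_mul _ _

lemma integrand_int (hh : 0 < h) {v : EuclideanSpace ℝ (Fin d) → ℝ}
    (hv : Measurable v) (hv1 : ∀ x, |v x| ≤ 1) (x : EuclideanSpace ℝ (Fin d)) :
    Integrable (fun y => gauss d h (x - y) * v y) := by
  have hg : Integrable (fun y : EuclideanSpace ℝ (Fin d) => gauss d h (x - y)) :=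
    (integrable_gauss hh).comp_sub_left x
  have := hg.bdd_mul hv.aestronglyMeasurable (ae_of_all _ fun y => by simpa using hv1 y)
  simpa [mul_comm] using this

lemma prod_int (hh : 0 < h) {v : EuclideanSpace ℝ (Fin d) → ℝ} (hv_int : Integrable v) :
    Integrable (fun p : (EuclideanSpace ℝ (Fin d)) × (EuclideanSpace ℝ (Fin d)) =>
      gauss d h (p.1 - p.2) * v p.2)
      ((volume : Measure (EuclideanSpace ℝ (Fin d))).prod volume) := by
  have h1 : Integrable (fun q : (EuclideanSpace ℝ (Fin d)) × (EuclideanSpace ℝ (Fin d)) =>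
      gauss d h q.1 * v q.2) ((volume : Measure (EuclideanSpace ℝ (Fin d))).prod volume) :=
    (integrable_gauss hh).mul_prod hv_int
  have h2 := ((measurePreserving_sub_prod (volume : Measure (EuclideanSpace ℝ (Fin d)))
    volume).integrable_comp h1.aestronglyMeasurable).mpr h1
  simpa [Function.comp_def] using h2

lemma prod_int_mul (hh : 0 < h) {φ v : EuclideanSpace ℝ (Fin d) → ℝ}
    (hφ : Measurable φ) (C : ℝ) (hφb : ∀ x, ‖φ x‖ ≤ C) (hv_int : Integrable v) :
    Integrable (fun p : (EuclideanSpace ℝ (Fin d)) × (EuclideanSpace ℝ (Fin d)) =>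
      φ p.1 * (gauss d h (p.1 - p.2) * v p.2))
      ((volume : Measure (EuclideanSpace ℝ (Fin d))).prod volume) :=
  (prod_int hh hv_int).bdd_mul ((hφ.comp measurable_fst).aestronglyMeasurable)
    (ae_of_all _ fun p => hφb p.1)

lemma B_eq (hh : 0 < h) {φ v : EuclideanSpace ℝ (Fin d) → ℝ}
    (hφ : Measurable φ) (C : ℝ) (hφb : ∀ x, ‖φ x‖ ≤ C) (hv_int : Integrable v) :
    ∫ x, φ x * conv d (gauss d h) v x
      = ∫ p : (EuclideanSpace ℝ (Fin d)) × (EuclideanSpace ℝ (Fin d)),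
          φ p.1 * (gauss d h (p.1-p.2) * v p.2)
          ∂((volume : Measure (EuclideanSpace ℝ (Fin d))).prod volume) := by
  rw [integral_prod _ (prod_int_mul hh hφ C hφb hv_int)]
  congr 1; funext x
  show φ x * conv d (gauss d h) v x = ∫ y, φ x * (gauss d h (x - y) * v y)
  rw [integral_const_mul]
  rfl

lemma swap_eq (hh : 0 < h) {v w : EuclideanSpace ℝ (Fin d) → ℝ} :
    ∫ p : (EuclideanSpace ℝ (Fin d)) × (EuclideanSpace ℝ (Fin d)),
        v p.1 * (gauss d h (p.1-p.2) * w p.2)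
        ∂((volume : Measure (EuclideanSpace ℝ (Fin d))).prod volume)
      = ∫ p : (EuclideanSpace ℝ (Fin d)) × (EuclideanSpace ℝ (Fin d)),
          w p.1 * (gauss d h (p.1-p.2) * v p.2)
          ∂((volume : Measure (EuclideanSpace ℝ (Fin d))).prod volume) := by
  rw [← integral_prod_swap (fun q : (EuclideanSpace ℝ (Fin d)) × (EuclideanSpace ℝ (Fin d)) =>
      w q.1 * (gauss d h (q.1-q.2) * v q.2))]
  congr 1; funext p
  simp only [Prod.fst_swap, Prod.snd_swap]
  rw [gauss_sub_rev p.2 p.1]; ring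

lemma sq_conv (hh : 0 < h) {f : EuclideanSpace ℝ (Fin d) → ℝ}
    (hf : Measurable f) (hf1 : ∀ x, |f x| ≤ 1) (hf_int : Integrable f) :
    ∫ x, (conv d (gauss d (h/2)) f x)^2 = ∫ x, f x * conv d (gauss d h) f x := by
  have hh2 : 0 < h/2 := by linarith
  set c := conv d (gauss d (h/2)) f with hc
  have hc_meas : Measurable c := conv_gauss_meas hh2 hf
  set M : ℝ := (2*Real.pi*(h/2))^(-(d:ℝ)/2) * ∫ y, ‖f y‖ with hM
  have hc_bdd : ∀ x, ‖c x‖ ≤ M := conv_gauss_bound hh2 hf_int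
  have inner : ∀ y, ∫ x, gauss d (h/2) (x - y) * c x = conv d (gauss d h) f y := by
    intro y
    have expand : ∀ x, gauss d (h/2) (x - y) * c x
        = ∫ z, gauss d (h/2) (x - y) * (gauss d (h/2) (x - z) * f z) := by
      intro x
      rw [integral_const_mul]
      rfl
    simp_rw [expand]
    have hint2 : Integrable (fun p : (EuclideanSpace ℝ (Fin d)) × (EuclideanSpace ℝ (Fin d)) =>
        gauss d (h/2) (p.1 - y) * (gauss d (h/2) (p.1 - p.2) * f p.2))
        ((volume : Measure (EuclideanSpace ℝ (Fin d))).prod volume) := by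
      apply (prod_int hh2 hf_int).bdd_mul (c := (2*Real.pi*(h/2))^(-(d:ℝ)/2))
        (((gauss_continuous hh2).measurable.comp
          (measurable_fst.sub measurable_const)).aestronglyMeasurable)
      refine ae_of_all _ (fun p => ?_)
      simp only [Function.comp_apply]
      rw [Real.norm_eq_abs, abs_of_nonneg (gauss_nonneg hh2 _)]
      exact gauss_le hh2 _
    rw [← integral_prod _ hint2, integral_prod_symm _ hint2]
    show _ = ∫ z, gauss d h (y - z) * f z
    congr 1; funext z
    have hring : ∀ x, gauss d (h/2) (x - y) * (gauss d (h/2) (x - z) * f z)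
        = (gauss d (h/2) (x - y) * gauss d (h/2) (x - z)) * f z := fun x => by ring
    simp_rw [hring]
    rw [integral_mul_const, gauss_mul hh y z]
  simp_rw [pow_two]
  calc ∫ x, c x * c x
      = ∫ p : (EuclideanSpace ℝ (Fin d)) × (EuclideanSpace ℝ (Fin d)),
          c p.1 * (gauss d (h/2) (p.1-p.2) * f p.2)
          ∂((volume : Measure (EuclideanSpace ℝ (Fin d))).prod volume) :=
        B_eq hh2 hc_meas M hc_bdd hf_int
    _ = ∫ y, ∫ x, c x * (gauss d (h/2) (x - y) * f y) := by
        rw [integral_prod_symm _ (prod_int_mul hh2 hc_meas M hc_bdd hf_int)]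
    _ = ∫ y, f y * ∫ x, gauss d (h/2) (x - y) * c x := by
        congr 1; funext y
        have hring : ∀ x, c x * (gauss d (h/2) (x - y) * f y)
            = f y * (gauss d (h/2) (x - y) * c x) := fun x => by ring
        simp_rw [hring]
        rw [integral_const_mul]
    _ = ∫ y, f y * conv d (gauss d h) f y := by
        congr 1; funext y
        rw [inner y]

theorem stmt_6 (d : ℕ) (hd : 1 ≤ d) (h : ℝ) (hh : 0 < h)
    (u χ : EuclideanSpace ℝ (Fin d) → ℝ)
    (hu_meas : Measurable u) (hχ_meas : Measurable χ)
    (hu_range : ∀ x, u x ∈ Set.Icc (0 : ℝ) 1) (hχ_range : ∀ x, χ x ∈ Set.Icc (0 : ℝ) 1)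
    (hu_int : Integrable u) (hχ_int : Integrable χ) :
    (∫ x, (conv d (gauss d (h / 2)) (fun y => u y - χ y) x) ^ 2)
      + ((∫ x, u x) - ∫ x, u x * conv d (gauss d h) u x)
    = (∫ x, u x * (1 - 2 * conv d (gauss d h) χ x))
      + ∫ x, χ x * conv d (gauss d h) χ x := by
  have hu1 : ∀ x, |u x| ≤ 1 := fun x =>
    abs_le.mpr ⟨by linarith [(hu_range x).1], (hu_range x).2⟩
  have hχ1 : ∀ x, |χ x| ≤ 1 := fun x =>
    abs_le.mpr ⟨by linarith [(hχ_range x).1], (hχ_range x).2⟩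
  have hf_meas : Measurable fun x => u x - χ x := hu_meas.sub hχ_meas
  have hf_int : Integrable fun x => u x - χ x := hu_int.sub hχ_int
  have hf1 : ∀ x, |u x - χ x| ≤ 1 := fun x => abs_le.mpr
    ⟨by linarith [(hu_range x).1, (hχ_range x).2], by linarith [(hu_range x).2, (hχ_range x).1]⟩
  have conv_sub : ∀ x, conv d (gauss d h) (fun y => u y - χ y) x
      = conv d (gauss d h) u x - conv d (gauss d h) χ x := by
    intro x
    show (∫ y, gauss d h (x - y) * (u y - χ y))
      = (∫ y, gauss d h (x - y) * u y) - ∫ y, gauss d h (x - y) * χ y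
    rw [← integral_sub (integrand_int hh hu_meas hu1 x) (integrand_int hh hχ_meas hχ1 x)]
    congr 1; funext y; ring
  have hprod : ∀ v w : EuclideanSpace ℝ (Fin d) → ℝ, Integrable v → (∀ x, |v x| ≤ 1) →
      Measurable w → Integrable w →
      Integrable (fun x => v x * conv d (gauss d h) w x) := by
    intro v w hv_int hv1 hw_meas hw_int
    have := hv_int.bdd_mul (conv_gauss_meas hh hw_meas).aestronglyMeasurable
      (ae_of_all _ (conv_gauss_bound hh hw_int))
    simpa [mul_comm] using this
  have Iuu' := hprod u u hu_int hu1 hu_meas hu_int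
  have Iuχ' := hprod u χ hu_int hu1 hχ_meas hχ_int
  have Iχu' := hprod χ u hχ_int hχ1 hu_meas hu_int
  have Iχχ' := hprod χ χ hχ_int hχ1 hχ_meas hχ_int
  have hsym : ∫ x, u x * conv d (gauss d h) χ x = ∫ x, χ x * conv d (gauss d h) u x := by
    rw [B_eq hh hu_meas 1 (fun x => by simpa using hu1 x) hχ_int,
      B_eq hh hχ_meas 1 (fun x => by simpa using hχ1 x) hu_int]
    exact swap_eq hh
  have step1 : ∫ x, (conv d (gauss d (h / 2)) (fun y => u y - χ y) x) ^ 2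
      = ∫ x, (u x - χ x) * conv d (gauss d h) (fun y => u y - χ y) x :=
    sq_conv hh hf_meas hf1 hf_int
  have expand : ∫ x, (u x - χ x) * conv d (gauss d h) (fun y => u y - χ y) x
      = (∫ x, u x * conv d (gauss d h) u x) - (∫ x, u x * conv d (gauss d h) χ x)
        - ((∫ x, χ x * conv d (gauss d h) u x) - ∫ x, χ x * conv d (gauss d h) χ x) := by
    have eA : ∫ x, (u x * conv d (gauss d h) u x - u x * conv d (gauss d h) χ x)
        = (∫ x, u x * conv d (gauss d h) u x) - ∫ x, u x * conv d (gauss d h) χ x :=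
      integral_sub Iuu' Iuχ'
    have eB : ∫ x, (χ x * conv d (gauss d h) u x - χ x * conv d (gauss d h) χ x)
        = (∫ x, χ x * conv d (gauss d h) u x) - ∫ x, χ x * conv d (gauss d h) χ x :=
      integral_sub Iχu' Iχχ'
    have eC : ∫ x, ((u x * conv d (gauss d h) u x - u x * conv d (gauss d h) χ x)
          - (χ x * conv d (gauss d h) u x - χ x * conv d (gauss d h) χ x))
        = (∫ x, (u x * conv d (gauss d h) u x - u x * conv d (gauss d h) χ x))
          - ∫ x, (χ x * conv d (gauss d h) u x - χ x * conv d (gauss d h) χ x) :=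
      integral_sub (Iuu'.sub Iuχ') (Iχu'.sub Iχχ')
    rw [show (fun x => (u x - χ x) * conv d (gauss d h) (fun y => u y - χ y) x)
        = fun x => ((u x * conv d (gauss d h) u x - u x * conv d (gauss d h) χ x)
          - (χ x * conv d (gauss d h) u x - χ x * conv d (gauss d h) χ x)) from
      funext fun x => by rw [conv_sub x]; ring]
    rw [eC, eA, eB]
  have rhs1 : ∫ x, u x * (1 - 2 * conv d (gauss d h) χ x)
      = (∫ x, u x) - 2 * ∫ x, u x * conv d (gauss d h) χ x := by
    have hr : ∀ x, u x * (1 - 2 * conv d (gauss d h) χ x)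
        = u x - 2 * (u x * conv d (gauss d h) χ x) := fun x => by ring
    simp_rw [hr]
    rw [integral_sub hu_int (Iuχ'.const_mul 2), integral_const_mul]
  rw [step1, expand, rhs1, hsym]
  ring
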